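/- Suppose h : [0,T) → ℝ is the maximal solution of h'' = (h')² h with h(0) = h'(0) = 1, and set x₃ = x₄ = h. Then the quantity ẋ₃²·(-½x₄² - ½x₃² + x₃x₄ - 2) equals -2(h')², and T < ∞ with h'(t) → ∞ as t → T; hence this quantity tends to -∞ in finite time. -/

import Mathlib

open Real Set Filter intervalIntegral

noncomputable def StmtAuxF (H : ℝ) : ℝ := ∫ s in (1:ℝ)..H, Real.exp ((1 - s^2)/2)

lemma StmtAuxF_cont : Continuous fun s : ℝ => Real.exp ((1 - s^2)/2) := by continuity

lemma StmtAuxF_hasDeriv (x : ℝ) : HasDerivAt StmtAuxF (Real.exp ((1 - x^2)/2)) x :=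
  intervalIntegral.integral_hasDerivAt_right (StmtAuxF_cont.intervalIntegrable _ _)
    (StmtAuxF_cont.stronglyMeasurable.stronglyMeasurableAtFilter) StmtAuxF_cont.continuousAt

lemma StmtAuxF_mono : StrictMono StmtAuxF := by
  apply strictMono_of_deriv_pos; intro x; rw [(StmtAuxF_hasDeriv x).deriv]; positivity

lemma StmtAuxF_one : StmtAuxF 1 = 0 := intervalIntegral.integral_same

lemma StmtAuxF_lt_one (H : ℝ) : StmtAuxF H < 1 := by
  rcases le_or_gt H 1 with hH | hH
  · calc StmtAuxF H ≤ StmtAuxF 1 := StmtAuxF_mono.monotone hH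
    _ < 1 := by rw [StmtAuxF_one]; norm_num
  · have hle : StmtAuxF H ≤ ∫ s in (1:ℝ)..H, Real.exp (1 - s) := by
      apply intervalIntegral.integral_mono_on hH.le
        (StmtAuxF_cont.intervalIntegrable _ _)
        ((Real.continuous_exp.comp (by continuity)).intervalIntegrable _ _)
      intro s _
      apply Real.exp_le_exp.2
      nlinarith [sq_nonneg (s - 1)]
    have hval : (∫ s in (1:ℝ)..H, Real.exp (1 - s)) = Real.exp 0 - Real.exp (1 - H) := by
      have := intervalIntegral.integral_comp_sub_left (a := (1:ℝ)) (b := H) Real.exp 1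
      rw [this, integral_exp]; norm_num
    have : Real.exp 0 - Real.exp (1 - H) < 1 := by
      rw [Real.exp_zero]; have := Real.exp_pos (1 - H); linarith
    linarith

noncomputable def StmtAuxTstar : ℝ := sSup (Set.range StmtAuxF)

lemma StmtAuxF_bdd : BddAbove (Set.range StmtAuxF) :=
  ⟨1, by rintro _ ⟨H, rfl⟩; exact (StmtAuxF_lt_one H).le⟩

lemma StmtAuxF_lt_Tstar (H : ℝ) : StmtAuxF H < StmtAuxTstar :=
  lt_of_lt_of_le (StmtAuxF_mono (lt_add_one H)) (le_csSup StmtAuxF_bdd ⟨H + 1, rfl⟩)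

lemma StmtAuxTstar_pos : 0 < StmtAuxTstar := StmtAuxF_one ▸ StmtAuxF_lt_Tstar 1

lemma StmtAux_exists_lt (y : ℝ) (hy : y < StmtAuxTstar) : ∃ H, y < StmtAuxF H := by
  obtain ⟨_, ⟨H, rfl⟩, h⟩ := exists_lt_of_lt_csSup (Set.range_nonempty _) hy
  exact ⟨H, h⟩

lemma StmtAux_surj {y : ℝ} (h0 : StmtAuxF 0 < y) (hT : y < StmtAuxTstar) :
    ∃ H, StmtAuxF H = y := by
  obtain ⟨H₁, hH₁⟩ := StmtAux_exists_lt y hT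
  have hc : ContinuousOn StmtAuxF (Set.Icc 0 H₁) :=
    fun x _ => ((StmtAuxF_hasDeriv x).differentiableAt.continuousAt).continuousWithinAt
  have h01 : (0:ℝ) ≤ H₁ := by
    by_contra hn
    exact absurd (StmtAuxF_mono (by linarith : H₁ < 0)) (by linarith)
  obtain ⟨x, _, hx⟩ := intermediate_value_Icc h01 hc ⟨h0.le, hH₁.le⟩
  exact ⟨x, hx⟩

noncomputable def StmtAuxg : ℝ → ℝ := Function.invFun StmtAuxF

lemma StmtAuxg_F (x : ℝ) : StmtAuxg (StmtAuxF x) = x :=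
  Function.leftInverse_invFun StmtAuxF_mono.injective x

def StmtAuxS : Set ℝ := Set.Ioo (StmtAuxF 0) StmtAuxTstar

lemma StmtAuxS_open : IsOpen StmtAuxS := isOpen_Ioo

lemma StmtAuxF_g {y : ℝ} (hy : y ∈ StmtAuxS) : StmtAuxF (StmtAuxg y) = y := by
  obtain ⟨H, hH⟩ := StmtAux_surj hy.1 hy.2
  rw [← hH, StmtAuxg_F]

lemma StmtAuxg_cont {y : ℝ} (hy : y ∈ StmtAuxS) : ContinuousAt StmtAuxg y := by
  rw [ContinuousAt, tendsto_order]
  constructor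
  · intro a ha
    have h1 : StmtAuxF a < y := by
      have := StmtAuxF_mono ha; rwa [StmtAuxF_g hy] at this
    have hmem : Set.Ioo (max (StmtAuxF a) (StmtAuxF 0)) StmtAuxTstar ∈ nhds y :=
      Ioo_mem_nhds (max_lt h1 hy.1) hy.2
    filter_upwards [hmem] with z hz
    have hzS : z ∈ StmtAuxS := ⟨lt_of_le_of_lt (le_max_right _ _) hz.1, hz.2⟩
    have : StmtAuxF a < StmtAuxF (StmtAuxg z) := by
      rw [StmtAuxF_g hzS]; exact lt_of_le_of_lt (le_max_left _ _) hz.1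
    exact StmtAuxF_mono.lt_iff_lt.mp this
  · intro b hb
    have h1 : y < StmtAuxF b := by
      have := StmtAuxF_mono hb; rwa [StmtAuxF_g hy] at this
    have hmem : Set.Ioo (StmtAuxF 0) (StmtAuxF b) ∈ nhds y := Ioo_mem_nhds hy.1 h1
    filter_upwards [hmem] with z hz
    have hzS : z ∈ StmtAuxS := ⟨hz.1, lt_trans hz.2 (StmtAuxF_lt_Tstar b)⟩
    have : StmtAuxF (StmtAuxg z) < StmtAuxF b := by rw [StmtAuxF_g hzS]; exact hz.2
    exact StmtAuxF_mono.lt_iff_lt.mp this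

lemma StmtAuxg_hasDeriv {y : ℝ} (hy : y ∈ StmtAuxS) :
    HasDerivAt StmtAuxg (Real.exp (((StmtAuxg y)^2 - 1)/2)) y := by
  have h := HasDerivAt.of_local_left_inverse (StmtAuxg_cont hy)
    (StmtAuxF_hasDeriv (StmtAuxg y)) (Real.exp_ne_zero _)
    (Filter.eventually_of_mem (StmtAuxS_open.mem_nhds hy) (fun z hz => StmtAuxF_g hz))
  have e : Real.exp (((StmtAuxg y)^2 - 1)/2) = (Real.exp ((1 - StmtAuxg y ^ 2) / 2))⁻¹ := by
    rw [← Real.exp_neg]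
    ring_nf
  rw [e]; exact h

lemma StmtAuxg_deriv_eq {y : ℝ} (hy : y ∈ StmtAuxS) :
    deriv StmtAuxg y = Real.exp (((StmtAuxg y)^2 - 1)/2) := (StmtAuxg_hasDeriv hy).deriv

lemma StmtAuxg_deriv_eventually {y : ℝ} (hy : y ∈ StmtAuxS) :
    deriv StmtAuxg =ᶠ[nhds y] fun z => Real.exp (((StmtAuxg z)^2 - 1)/2) :=
  Filter.eventually_of_mem (StmtAuxS_open.mem_nhds hy) (fun _ hz => StmtAuxg_deriv_eq hz)

lemma StmtAuxg_deriv2 {y : ℝ} (hy : y ∈ StmtAuxS) :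
    DifferentiableAt ℝ (deriv StmtAuxg) y ∧
    deriv (deriv StmtAuxg) y = (deriv StmtAuxg y)^2 * StmtAuxg y := by
  have hg := StmtAuxg_hasDeriv hy
  have hrhs : HasDerivAt (fun z => Real.exp (((StmtAuxg z)^2 - 1)/2))
      (Real.exp (((StmtAuxg y)^2 - 1)/2) *
        ((2 * StmtAuxg y * Real.exp (((StmtAuxg y)^2 - 1)/2)) / 2)) y := by
    have h1 : HasDerivAt (fun z => ((StmtAuxg z)^2 - 1)/2)
        ((2 * StmtAuxg y * Real.exp (((StmtAuxg y)^2 - 1)/2)) / 2) y := by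
      have := ((hg.pow 2).sub_const 1).div_const 2
      exact this.congr_deriv (by norm_num)
    exact h1.exp
  constructor
  · rw [(StmtAuxg_deriv_eventually hy).differentiableAt_iff]
    exact hrhs.differentiableAt
  · rw [(StmtAuxg_deriv_eventually hy).deriv_eq, hrhs.deriv, StmtAuxg_deriv_eq hy]
    ring

lemma StmtAux_mem_S {t : ℝ} (ht0 : 0 ≤ t) (htT : t < StmtAuxTstar) : t ∈ StmtAuxS := by
  have h := StmtAuxF_mono (show (0:ℝ) < 1 by norm_num)
  rw [StmtAuxF_one] at h
  exact ⟨lt_of_lt_of_le h ht0, htT⟩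

/-- `h` solves `h'' = (h')² h` on `[0, T)`, `T : EReal`. -/
def SolvesGeo (h : ℝ → ℝ) (T : EReal) : Prop :=
  ∀ t : ℝ, 0 ≤ t → (t : EReal) < T →
    DifferentiableAt ℝ h t ∧ DifferentiableAt ℝ (deriv h) t ∧
    deriv (deriv h) t = (deriv h t) ^ 2 * h t

lemma StmtAux_gsolves : SolvesGeo StmtAuxg (StmtAuxTstar : EReal) := by
  intro t ht0 htT
  rw [EReal.coe_lt_coe_iff] at htT
  have hS := StmtAux_mem_S ht0 htT
  exact ⟨(StmtAuxg_hasDeriv hS).differentiableAt, (StmtAuxg_deriv2 hS).1,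
    (StmtAuxg_deriv2 hS).2⟩

theorem stmt_15 (h : ℝ → ℝ) (T : EReal) (hT : 0 < T)
    (hh0 : h 0 = 1) (hh'0 : deriv h 0 = 1)
    (hsol : SolvesGeo h T)
    (hmax : ¬ ∃ (T' : EReal) (g : ℝ → ℝ), T < T' ∧
        (∀ t : ℝ, 0 ≤ t → (t : EReal) < T → g t = h t) ∧ SolvesGeo g T') :
    -- with x₃ = x₄ = h, the Ricci quantity simplifies to -2(h')²
    (∀ t : ℝ,
      (deriv h t) ^ 2 *
        (-(1 / 2) * (h t) ^ 2 - (1 / 2) * (h t) ^ 2 + h t * h t - 2) =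
      -2 * (deriv h t) ^ 2) ∧
    T < ⊤ ∧
    Filter.Tendsto (deriv h) (nhdsWithin T.toReal (Set.Iio T.toReal)) Filter.atTop ∧
    Filter.Tendsto
      (fun t : ℝ => (deriv h t) ^ 2 *
        (-(1 / 2) * (h t) ^ 2 - (1 / 2) * (h t) ^ 2 + h t * h t - 2))
      (nhdsWithin T.toReal (Set.Iio T.toReal)) Filter.atBot := by
  have part1 : ∀ t : ℝ,
      (deriv h t) ^ 2 *
        (-(1 / 2) * (h t) ^ 2 - (1 / 2) * (h t) ^ 2 + h t * h t - 2) =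
      -2 * (deriv h t) ^ 2 := fun t => by ring
  -- derivative facts on [0, T)
  have hd : ∀ s : ℝ, 0 ≤ s → (s : EReal) < T →
      HasDerivAt h (deriv h s) s ∧ HasDerivAt (deriv h) ((deriv h s)^2 * h s) s := by
    intro s hs0 hsT
    obtain ⟨h1, h2, h3⟩ := hsol s hs0 hsT
    exact ⟨h1.hasDerivAt, h3 ▸ h2.hasDerivAt⟩
  -- conserved quantity: h' = exp((h² - 1)/2)
  have key1 : ∀ t : ℝ, 0 ≤ t → (t : EReal) < T →
      deriv h t = Real.exp (((h t)^2 - 1)/2) := by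
    intro t ht0 htT
    have hmem : ∀ s ∈ Set.Icc (0:ℝ) t, 0 ≤ s ∧ (s : EReal) < T := fun s hs =>
      ⟨hs.1, lt_of_le_of_lt (EReal.coe_le_coe_iff.2 hs.2) htT⟩
    have hEderiv : ∀ s ∈ Set.Icc (0:ℝ) t,
        HasDerivAt (fun u => deriv h u * Real.exp (-(h u)^2/2)) 0 s := by
      intro s hs
      obtain ⟨hd1, hd2⟩ := hd s (hmem s hs).1 (hmem s hs).2
      have hexp : HasDerivAt (fun u => Real.exp (-(h u)^2/2))
          (Real.exp (-(h s)^2/2) * (-(2 * h s * deriv h s)/2)) s := by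
        have h5 : HasDerivAt (fun u => -(h u)^2/2) (-(2 * h s * deriv h s)/2) s := by
          have := ((hd1.pow 2).neg).div_const 2
          exact this.congr_deriv (by norm_num)
        exact h5.exp
      have hmul := hd2.mul hexp
      rw [show (0:ℝ) = (deriv h s)^2 * h s * Real.exp (-(h s)^2/2) +
        deriv h s * (Real.exp (-(h s)^2/2) * (-(2 * h s * deriv h s)/2)) from by ring]
      exact hmul
    have hEcont : ContinuousOn (fun u => deriv h u * Real.exp (-(h u)^2/2))
        (Set.Icc 0 t) := fun s hs =>
      ((hEderiv s hs).differentiableAt.continuousAt).continuousWithinAt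
    have hEconst := constant_of_has_deriv_right_zero hEcont
      (fun s hs => (hEderiv s (Set.mem_Icc_of_Ico hs)).hasDerivWithinAt)
    have hEt := hEconst t (Set.right_mem_Icc.2 ht0)
    simp only [hh0, hh'0] at hEt
    -- hEt : deriv h t * exp(-(h t)²/2) = 1 * exp(-1²/2)
    have hne : Real.exp (-(h t)^2/2) ≠ 0 := Real.exp_ne_zero _
    have : deriv h t = 1 * Real.exp (-(1:ℝ)^2/2) / Real.exp (-(h t)^2/2) := by
      rw [eq_div_iff hne]; exact hEt
    rw [this, one_mul, ← Real.exp_sub]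
    congr 1
    ring
  -- F(h t) = t
  have key2 : ∀ t : ℝ, 0 ≤ t → (t : EReal) < T → StmtAuxF (h t) = t := by
    intro t ht0 htT
    have hmem : ∀ s ∈ Set.Icc (0:ℝ) t, 0 ≤ s ∧ (s : EReal) < T := fun s hs =>
      ⟨hs.1, lt_of_le_of_lt (EReal.coe_le_coe_iff.2 hs.2) htT⟩
    have hφderiv : ∀ s ∈ Set.Icc (0:ℝ) t,
        HasDerivAt (fun u => StmtAuxF (h u) - u) 0 s := by
      intro s hs
      obtain ⟨hd1, _⟩ := hd s (hmem s hs).1 (hmem s hs).2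
      have hcomp : HasDerivAt (fun u => StmtAuxF (h u))
          (Real.exp ((1 - (h s)^2)/2) * deriv h s) s :=
        (StmtAuxF_hasDeriv (h s)).comp s hd1
      have := hcomp.sub (hasDerivAt_id s)
      rw [show (0:ℝ) = Real.exp ((1 - (h s)^2)/2) * deriv h s - 1 from ?_]
      · exact this
      · rw [key1 s (hmem s hs).1 (hmem s hs).2, ← Real.exp_add,
          show (1 - h s ^ 2) / 2 + (h s ^ 2 - 1) / 2 = 0 from by ring, Real.exp_zero]
        norm_num
    have hφcont : ContinuousOn (fun u => StmtAuxF (h u) - u) (Set.Icc 0 t) :=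
      fun s hs => ((hφderiv s hs).differentiableAt.continuousAt).continuousWithinAt
    have hφconst := constant_of_has_deriv_right_zero hφcont
      (fun s hs => (hφderiv s (Set.mem_Icc_of_Ico hs)).hasDerivWithinAt)
    have hφt := hφconst t (Set.right_mem_Icc.2 ht0)
    simp only [hh0, StmtAuxF_one] at hφt
    linarith [hφt]
  have hTle : T ≤ (StmtAuxTstar : EReal) := by
    by_contra hlt
    push_neg at hlt
    have h0 : (0:ℝ) ≤ StmtAuxTstar := StmtAuxTstar_pos.le
    have hk := key2 StmtAuxTstar h0 hlt
    exact absurd hk (StmtAuxF_lt_Tstar (h StmtAuxTstar)).ne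
  have hTtop : T < ⊤ := lt_of_le_of_lt hTle (EReal.coe_lt_top _)
  have hTeq : T = (StmtAuxTstar : EReal) := by
    rcases eq_or_lt_of_le hTle with heq | hlt
    · exact heq
    · exact absurd ⟨(StmtAuxTstar : EReal), StmtAuxg, hlt, fun t ht0 htT => by
        conv_lhs => rw [← key2 t ht0 htT]
        exact StmtAuxg_F (h t), StmtAux_gsolves⟩ hmax
  have htoReal : T.toReal = StmtAuxTstar := by rw [hTeq]; exact EReal.toReal_coe _
  have hhtop : Tendsto h (nhdsWithin StmtAuxTstar (Set.Iio StmtAuxTstar)) atTop := by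
    rw [tendsto_atTop]
    intro M
    have hmax0 : max 0 (StmtAuxF M) < StmtAuxTstar :=
      max_lt StmtAuxTstar_pos (StmtAuxF_lt_Tstar M)
    have hmem : Set.Ioo (max 0 (StmtAuxF M)) StmtAuxTstar ∈
        nhdsWithin StmtAuxTstar (Set.Iio StmtAuxTstar) :=
      Ioo_mem_nhdsLT_of_mem ⟨hmax0, le_refl _⟩
    filter_upwards [hmem] with s hs
    have hs0 : (0:ℝ) ≤ s := le_of_lt (lt_of_le_of_lt (le_max_left _ _) hs.1)
    have hsT : (s : EReal) < T := by rw [hTeq, EReal.coe_lt_coe_iff]; exact hs.2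
    have hk := key2 s hs0 hsT
    have : StmtAuxF M < StmtAuxF (h s) := by
      rw [hk]; exact lt_of_le_of_lt (le_max_right _ _) hs.1
    exact (StmtAuxF_mono.lt_iff_lt.mp this).le
  have hdtop : Tendsto (deriv h) (nhdsWithin StmtAuxTstar (Set.Iio StmtAuxTstar)) atTop := by
    rw [tendsto_atTop]
    intro M
    have hmem : Set.Ioo (0:ℝ) StmtAuxTstar ∈
        nhdsWithin StmtAuxTstar (Set.Iio StmtAuxTstar) :=
      Ioo_mem_nhdsLT_of_mem ⟨StmtAuxTstar_pos, le_refl _⟩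
    filter_upwards [(tendsto_atTop.1 hhtop) (max M 1), hmem] with s hs1 hs2
    have hsT : (s : EReal) < T := by rw [hTeq, EReal.coe_lt_coe_iff]; exact hs2.2
    rw [key1 s hs2.1.le hsT]
    have hh1 : 1 ≤ h s := le_trans (le_max_right _ _) hs1
    have hhM : M ≤ h s := le_trans (le_max_left _ _) hs1
    have hexp : ((h s)^2 - 1)/2 + 1 ≤ Real.exp (((h s)^2 - 1)/2) := Real.add_one_le_exp _
    nlinarith [sq_nonneg (h s - 1)]
  have hfinal : Tendsto (fun t => -2 * (deriv h t)^2)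
      (nhdsWithin StmtAuxTstar (Set.Iio StmtAuxTstar)) atBot := by
    rw [tendsto_atBot]
    intro b
    filter_upwards [(tendsto_atTop.1 hdtop) (max 1 (-b))] with s hs
    have h1 : 1 ≤ deriv h s := le_trans (le_max_left _ _) hs
    have h2 : -b ≤ deriv h s := le_trans (le_max_right _ _) hs
    nlinarith
  refine ⟨part1, hTtop, ?_, ?_⟩
  · rw [htoReal]; exact hdtop
  · rw [htoReal]; exact hfinal.congr (fun t => (part1 t).symm)
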